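/- Let σ > 0 and for m ∈ ℝ define the Gaussian density φ_m(x) = (2π σ²)^{-1/2} exp(−(x−m)²/(2σ²)). Set f = φ_0, f_mix = (1/2)(φ_σ + φ_{−σ}), and f̄ = (1/2)(f + f_mix). Then for every x ∈ ℝ with |x| > (3/2)σ, one has f(x) < f̄(x). -/
import Mathlib


open Real

/-- One-dimensional Gaussian density with mean `m` and variance `σ²`. -/
noncomputable def gaussDensity1D (σ m x : ℝ) : ℝ :=
  (2 * π * σ ^ 2) ^ (-(1 : ℝ) / 2) * Real.exp (-(x - m) ^ 2 / (2 * σ ^ 2))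

theorem stmt_4 (σ : ℝ) (hσ : 0 < σ)
    (f fmix fbar : ℝ → ℝ)
    (hf : f = gaussDensity1D σ 0)
    (hfmix : fmix = fun x => (1 / 2) * (gaussDensity1D σ σ x + gaussDensity1D σ (-σ) x))
    (hfbar : fbar = fun x => (1 / 2) * (f x + fmix x)) :
    ∀ x : ℝ, |x| > (3 / 2) * σ → f x < fbar x := by
  subst hf hfmix hfbar
  intro x hx
  simp only [gaussDensity1D]
  have hcpos : 0 < (2 * π * σ ^ 2) ^ (-(1 : ℝ) / 2) :=
    Real.rpow_pos_of_pos (by have := Real.pi_pos; positivity) _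
  have hσ2 : (0:ℝ) < 2 * σ ^ 2 := by positivity
  -- factorization identities
  have h1 : Real.exp (-(x - σ) ^ 2 / (2 * σ ^ 2))
      = Real.exp (-(x - 0) ^ 2 / (2 * σ ^ 2)) * Real.exp (x / σ - 1 / 2) := by
    rw [← Real.exp_add]
    congr 1
    field_simp
    ring
  have h2 : Real.exp (-(x - -σ) ^ 2 / (2 * σ ^ 2))
      = Real.exp (-(x - 0) ^ 2 / (2 * σ ^ 2)) * Real.exp (-x / σ - 1 / 2) := by
    rw [← Real.exp_add]
    congr 1
    field_simp
    ring
  have hE : 0 < Real.exp (-(x - 0) ^ 2 / (2 * σ ^ 2)) := Real.exp_pos _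
  have key : 2 < Real.exp (x / σ - 1 / 2) + Real.exp (-x / σ - 1 / 2) := by
    have he : (2:ℝ) < Real.exp 1 := by
      have := Real.exp_one_gt_d9; linarith
    rcases le_or_gt 0 x with h | h
    · have hxs : 3 / 2 < x / σ := by
        rw [abs_of_nonneg h] at hx
        rw [lt_div_iff₀ hσ]; linarith
      have : Real.exp 1 < Real.exp (x / σ - 1 / 2) := by
        apply Real.exp_lt_exp.mpr; linarith
      have := Real.exp_pos (-x / σ - 1 / 2)
      linarith
    · have hxs : 3 / 2 < -x / σ := by
        rw [abs_of_neg h] at hx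
        rw [lt_div_iff₀ hσ]; linarith
      have : Real.exp 1 < Real.exp (-x / σ - 1 / 2) := by
        apply Real.exp_lt_exp.mpr; linarith
      have := Real.exp_pos (x / σ - 1 / 2)
      linarith
  rw [h1, h2]
  nlinarith [mul_pos hcpos hE]
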